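/- Let k < n be natural numbers and let V be a ground set with |V| = n. For every natural number m with m ≥ (k+2)^{k+2} · ln(n), there exists a MAS function F from the multisets over V of cardinality at most k to ℝ^m. -/

import Mathlib

open Finset

section AuxMAS

variable {V : Type*} [Fintype V] [DecidableEq V]


/-- `f` covers the pair `(v, D)` if `f v = 0` and `f` avoids `0` on `D`. -/
def Covers {K : ℕ} (f : V → Fin K) (p : V × Finset V) : Prop :=
  (f p.1).val = 0 ∧ ∀ u ∈ p.2, (f u).val ≠ 0

instance {K : ℕ} (f : V → Fin K) (p : V × Finset V) : Decidable (Covers f p) := by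
  unfold Covers; infer_instance

lemma covers_count {k : ℕ} (hk : 1 ≤ k) (v : V) (D : Finset V) (hv : v ∉ D)
    (hD : D.card ≤ 2*k-1) :
    (2*k-1)^(2*k-1) * (2*k)^(Fintype.card V)
      ≤ (2*k)^(2*k) * (univ.filter (fun f : V → Fin (2*k) => Covers f (v, D))).card := by
  classical
  have h2k : 0 < 2*k := by omega
  set allowed : V → Finset (Fin (2*k)) :=
    fun u => if u = v then univ.filter (fun x => x.val = 0)
      else if u ∈ D then univ.filter (fun x => x.val ≠ 0) else univ with hallowed
  have hset : univ.filter (fun f : V → Fin (2*k) => Covers f (v, D))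
      = Fintype.piFinset allowed := by
    ext f
    simp only [mem_filter, mem_univ, true_and, Fintype.mem_piFinset]
    simp only [Covers, hallowed]
    constructor
    · rintro ⟨h0, hD0⟩ u
      by_cases huv : u = v
      · subst huv; simp [h0]
      · by_cases huD : u ∈ D
        · simp [huv, huD, hD0 u huD]
        · simp [huv, huD]
    · intro h
      refine ⟨?_, ?_⟩
      · have := h v; simpa using this
      · intro u huD
        have := h u
        have huv : u ≠ v := fun e => hv (e ▸ huD)
        simpa [huv, huD] using this
  have hcard0 : (univ.filter (fun x : Fin (2*k) => x.val = 0)).card = 1 := by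
    rw [Finset.card_eq_one]
    exact ⟨⟨0, h2k⟩, by ext x; simp [Fin.ext_iff]⟩
  have hcardne : (univ.filter (fun x : Fin (2*k) => x.val ≠ 0)).card = 2*k-1 := by
    simp only [ne_eq]
    rw [Finset.filter_not, Finset.card_sdiff_of_subset (Finset.filter_subset _ _), hcard0]
    simp
  rw [hset, Fintype.card_piFinset]
  set N := Fintype.card V with hN
  have hprod : ∏ u, (allowed u).card = (2*k-1)^(D.card) * (2*k)^(N - 1 - D.card) := by
    rw [← Finset.prod_mul_prod_compl (insert v D)]
    have h1 : ∏ u ∈ insert v D, (allowed u).card = (2*k-1)^(D.card) := by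
      rw [Finset.prod_insert hv]
      have hv' : (allowed v).card = 1 := by simp [hallowed, hcard0]
      have hD' : ∀ u ∈ D, (allowed u).card = 2*k-1 := by
        intro u hu
        have huv : u ≠ v := fun e => hv (e ▸ hu)
        simp [hallowed, huv, hu, hcardne]
      rw [hv', Finset.prod_congr rfl hD', Finset.prod_const, one_mul]
    have h2 : ∏ u ∈ (insert v D)ᶜ, (allowed u).card = (2*k)^(N - 1 - D.card) := by
      have hall : ∀ u ∈ (insert v D)ᶜ, (allowed u).card = 2*k := by
        intro u hu
        simp only [Finset.mem_compl, Finset.mem_insert, not_or] at hu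
        simp [hallowed, hu.1, hu.2]
      rw [Finset.prod_congr rfl hall, Finset.prod_const, Finset.card_compl,
        Finset.card_insert_of_notMem hv]
      congr 1
      omega
    rw [h1, h2]
  rw [hprod]
  have hDn : D.card ≤ N - 1 := by
    have : (insert v D).card ≤ N := Finset.card_le_univ _
    rw [Finset.card_insert_of_notMem hv] at this
    omega
  have hn1 : 1 ≤ N := Fintype.card_pos_iff.mpr ⟨v⟩
  set i := D.card
  set a := 2*k-1 with hadef
  have ha : a ≤ 2*k := by omega
  have hia : i ≤ a := hD
  calc a^a * (2*k)^N
      = a^i * (a^(a-i) * (2*k)^N) := by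
        rw [← mul_assoc, ← pow_add]; congr 2; omega
    _ ≤ a^i * ((2*k)^(a-i) * (2*k)^N) := by
        have := Nat.pow_le_pow_left ha (a-i)
        exact Nat.mul_le_mul_left _ (Nat.mul_le_mul_right _ this)
    _ = a^i * (2*k)^((a-i) + N) := by rw [← pow_add]
    _ = a^i * (2*k)^(2*k + (N-1-i)) := by
        have : (a-i) + N = 2*k + (N-1-i) := by omega
        rw [this]
    _ = (2*k)^(2*k) * (a^i * (2*k)^(N-1-i)) := by rw [pow_add]; ring

lemma exists_good_f {k : ℕ} (hk : 1 ≤ k) (P : Finset (V × Finset V))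
    (hP : ∀ p ∈ P, p.1 ∉ p.2 ∧ p.2.card ≤ 2*k-1) :
    ∃ f : V → Fin (2*k),
      (2*k-1)^(2*k-1) * P.card ≤ (2*k)^(2*k) * (P.filter (fun p => Covers f p)).card := by
  classical
  have h2k : 0 < 2*k := by omega
  haveI : NeZero (2*k) := ⟨by omega⟩
  by_contra hcon
  push_neg at hcon
  have hne : (univ : Finset (V → Fin (2*k))).Nonempty := univ_nonempty
  -- double counting
  have hdc : ∑ f : V → Fin (2*k), ((P.filter (fun p => Covers f p)).card)
      = ∑ p ∈ P, ((univ.filter (fun f : V → Fin (2*k) => Covers f p)).card) := by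
    simp only [Finset.card_filter]
    rw [Finset.sum_comm]
  have hlow : (2*k-1)^(2*k-1) * (2*k)^(Fintype.card V) * P.card
      ≤ (2*k)^(2*k) * ∑ f : V → Fin (2*k), ((P.filter (fun p => Covers f p)).card) := by
    rw [hdc, Finset.mul_sum]
    calc (2*k-1)^(2*k-1) * (2*k)^(Fintype.card V) * P.card
        = ∑ _p ∈ P, (2*k-1)^(2*k-1) * (2*k)^(Fintype.card V) := by
          rw [Finset.sum_const, smul_eq_mul, mul_comm]
      _ ≤ _ := Finset.sum_le_sum (fun p hp => covers_count hk p.1 p.2 (hP p hp).1 (hP p hp).2)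
  have hup : ∑ f : V → Fin (2*k), ((2*k)^(2*k) * (P.filter (fun p => Covers f p)).card)
      < ∑ _f : V → Fin (2*k), (2*k-1)^(2*k-1) * P.card :=
    Finset.sum_lt_sum_of_nonempty hne (fun f _ => hcon f)
  rw [← Finset.mul_sum] at hup
  rw [Finset.sum_const, smul_eq_mul] at hup
  have hcardfun : (univ : Finset (V → Fin (2*k))).card = (2*k)^(Fintype.card V) := by
    rw [Finset.card_univ, Fintype.card_fun, Fintype.card_fin]
  rw [hcardfun] at hup
  -- combine:  c * (2k)^N * |P| ≤ d * Σ < (2k)^N * (c * |P|)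
  have := lt_of_le_of_lt hlow hup
  nlinarith [this]

lemma greedy {k : ℕ} (hk : 1 ≤ k) (t : ℕ) :
    ∀ (P : Finset (V × Finset V)), (∀ p ∈ P, p.1 ∉ p.2 ∧ p.2.card ≤ 2*k-1) →
    ∃ fs : Fin t → (V → Fin (2*k)),
      ((2*k)^(2*k))^t * (P.filter (fun p => ∀ i, ¬ Covers (fs i) p)).card
        ≤ ((2*k)^(2*k) - (2*k-1)^(2*k-1))^t * P.card := by
  classical
  haveI : NeZero (2*k) := ⟨by omega⟩
  induction t with
  | zero =>
    intro P hP
    refine ⟨Fin.elim0, ?_⟩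
    simp
  | succ t ih =>
    intro P hP
    obtain ⟨f, hf⟩ := exists_good_f hk P hP
    set P' := P.filter (fun p => ¬ Covers f p) with hP'def
    have hP' : ∀ p ∈ P', p.1 ∉ p.2 ∧ p.2.card ≤ 2*k-1 :=
      fun p hp => hP p (Finset.mem_of_mem_filter p hp)
    obtain ⟨fs, hfs⟩ := ih P' hP'
    refine ⟨Fin.cons f fs, ?_⟩
    set c := (2*k-1)^(2*k-1)
    set d := (2*k)^(2*k) with hddef
    have hcd : c ≤ d := by
      calc (2*k-1)^(2*k-1) ≤ (2*k)^(2*k-1) := Nat.pow_le_pow_left (by omega) _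
        _ ≤ (2*k)^(2*k) := Nat.pow_le_pow_right (by omega) (by omega)
    -- uncovered set equality
    have hU : P.filter (fun p => ∀ i, ¬ Covers ((Fin.cons f fs : Fin (t+1) → (V → Fin (2*k))) i) p)
        = P'.filter (fun p => ∀ i, ¬ Covers (fs i) p) := by
      rw [hP'def, Finset.filter_filter]
      apply Finset.filter_congr
      intro p _
      constructor
      · intro h
        exact ⟨h 0, fun i => by simpa using h i.succ⟩
      · rintro ⟨h0, hrest⟩ i
        refine Fin.cases ?_ ?_ i
        · simpa using h0
        · intro j; simpa using hrest j
    rw [hU]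
    -- arithmetic
    have hsplit : P'.card + (P.filter (fun p => Covers f p)).card = P.card := by
      rw [hP'def]
      rw [add_comm]
      exact Finset.card_filter_add_card_filter_not _
    have hd1 : d * P'.card ≤ (d - c) * P.card := by
      have h1 : d * P'.card + c * P.card ≤ d * P'.card + d * (P.filter (fun p => Covers f p)).card :=
        Nat.add_le_add_left hf _
      rw [← Nat.mul_add, hsplit] at h1
      have : (d - c) * P.card + c * P.card = d * P.card := by
        rw [← Nat.add_mul]
        congr 1
        omega
      omega
    calc d^(t+1) * (P'.filter (fun p => ∀ i, ¬ Covers (fs i) p)).card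
        = d * (d^t * (P'.filter (fun p => ∀ i, ¬ Covers (fs i) p)).card) := by ring
      _ ≤ d * ((d - c)^t * P'.card) := Nat.mul_le_mul_left _ hfs
      _ = (d - c)^t * (d * P'.card) := by ring
      _ ≤ (d - c)^t * ((d - c) * P.card) := Nat.mul_le_mul_left _ hd1
      _ = (d - c)^(t+1) * P.card := by ring

lemma keyNat (k : ℕ) (hk : 1 ≤ k) : 11*(k^2+k) ≤ (k+2)^(k+2) := by
  rcases Nat.lt_or_ge k 2 with h | h
  · interval_cases k
    · decide
  · calc 11*(k^2+k) ≤ (k+2)^4 := by nlinarith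
      _ ≤ (k+2)^(k+2) := Nat.pow_le_pow_right (by omega) (by omega)

lemma eBound (k : ℕ) (hk : 1 ≤ k) :
    (((2*k)^(2*k) : ℕ) : ℝ) ≤ 2*k * Real.exp 1 * (((2*k-1)^(2*k-1) : ℕ) : ℝ) := by
  have hN : 1 ≤ 2*k - 1 := by omega
  set N := 2*k - 1 with hNdef
  have hNR : (0:ℝ) < (N:ℕ) := by exact_mod_cast Nat.lt_of_lt_of_le Nat.zero_lt_one hN
  have h2k : (2*k : ℕ) = N + 1 := by omega
  -- (1 + 1/N)^N ≤ e
  have hx : (0:ℝ) ≤ 1/(N:ℝ) + 1 := by positivity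
  have h1 : (1/(N:ℝ) + 1)^N ≤ (Real.exp (1/(N:ℝ)))^N :=
    pow_le_pow_left₀ hx (Real.add_one_le_exp _) N
  have h2 : (Real.exp (1/(N:ℝ)))^N = Real.exp 1 := by
    rw [← Real.exp_nat_mul]
    congr 1
    field_simp
  -- (2k)^N = ((1+1/N) * N)^N ≤ e * N^N
  have h3 : ((2*k : ℕ) : ℝ) = (1/(N:ℝ) + 1) * N := by
    rw [h2k]
    push_cast
    field_simp
    ring
  have h4 : (((2*k)^(2*k) : ℕ) : ℝ) = ((2*k:ℕ):ℝ) * (((2*k:ℕ):ℝ))^N := by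
    rw [h2k]
    push_cast
    ring
  rw [h4, h3]
  have h5 : ((1/(N:ℝ) + 1) * N)^N = (1/(N:ℝ) + 1)^N * (N:ℝ)^N := mul_pow _ _ _
  rw [h5]
  have h6 : (1/(N:ℝ) + 1)^N * (N:ℝ)^N ≤ Real.exp 1 * (N:ℝ)^N := by
    apply mul_le_mul_of_nonneg_right (h1.trans (le_of_eq h2)) (by positivity)
  calc (1/(N:ℝ) + 1) * N * ((1/(N:ℝ) + 1)^N * (N:ℝ)^N)
      ≤ (1/(N:ℝ) + 1) * N * (Real.exp 1 * (N:ℝ)^N) := by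
        apply mul_le_mul_of_nonneg_left h6 (by positivity)
    _ = 2*k * Real.exp 1 * (((N:ℕ)^N : ℕ) : ℝ) := by
        rw [← h3]
        push_cast
        ring

set_option maxHeartbeats 1000000 in
lemma analytic (k n m : ℕ) (hk : 1 ≤ k) (hkn : k < n)
    (hm : ((k : ℝ) + 2) ^ (k + 2) * Real.log n ≤ m) :
    ¬ ((2*k)^(2*k))^m ≤ ((2*k)^(2*k) - (2*k-1)^(2*k-1))^m * (2*k*n^(2*k)) := by
  intro hcon
  have hn2 : 2 ≤ n := by omega
  set c := (2*k-1)^(2*k-1) with hcdef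
  set d := (2*k)^(2*k) with hddef
  have hcd : c < d := by
    calc c ≤ (2*k)^(2*k-1) := Nat.pow_le_pow_left (by omega) _
      _ < (2*k)^(2*k) := Nat.pow_lt_pow_right (by omega) (by omega)
  have hdc1 : 1 ≤ d - c := by omega
  have hlogn : 0 < Real.log n := Real.log_pos (by exact_mod_cast hn2)
  -- cast the assumed inequality to ℝ and take logs
  have hconR : ((d:ℝ))^m ≤ ((d - c : ℕ):ℝ)^m * ((2*k*n^(2*k) : ℕ) : ℝ) := by
    exact_mod_cast hcon
  have hdR : (0:ℝ) < (d:ℝ) := by positivity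
  have hdcR : (0:ℝ) < ((d-c : ℕ):ℝ) := by exact_mod_cast Nat.lt_of_lt_of_le Nat.zero_lt_one hdc1
  have hBR : (0:ℝ) < ((2*k*n^(2*k) : ℕ) : ℝ) := by
    have : 0 < 2*k*n^(2*k) := Nat.mul_pos (by omega) (pow_pos (by omega) _)
    exact_mod_cast this
  have hlog := Real.log_le_log (by positivity) hconR
  rw [Real.log_pow, Real.log_mul (by positivity) (by positivity), Real.log_pow] at hlog
  -- log B ≤ (2k+2) log n
  have hlogB : Real.log ((2*k*n^(2*k) : ℕ) : ℝ) ≤ (2*(k:ℝ)+2) * Real.log n := by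
    have hsplit : ((2*k*n^(2*k) : ℕ) : ℝ) = ((2*k : ℕ):ℝ) * ((n:ℝ))^(2*k) := by push_cast; ring
    rw [hsplit, Real.log_mul (by positivity) (by positivity), Real.log_pow]
    have h2kn : ((2*k : ℕ):ℝ) ≤ ((n:ℝ))^2 := by
      have : 2*k ≤ n^2 := by nlinarith
      exact_mod_cast this
    have hlg := Real.log_le_log (by positivity) h2kn
    rw [Real.log_pow] at hlg
    push_cast at hlg ⊢
    nlinarith [hlogn, hlg]
  -- log d - log (d-c) ≥ c/d
  have hgap : (c:ℝ)/(d:ℝ) ≤ Real.log d - Real.log ((d-c:ℕ):ℝ) := by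
    have h1 : Real.log (((d-c:ℕ):ℝ)/(d:ℝ)) ≤ ((d-c:ℕ):ℝ)/(d:ℝ) - 1 :=
      Real.log_le_sub_one_of_pos (by positivity)
    rw [Real.log_div (by positivity) (by positivity)] at h1
    have h2 : ((d-c:ℕ):ℝ) = (d:ℝ) - (c:ℝ) := by
      have : c ≤ d := le_of_lt hcd
      push_cast [this]
      ring
    rw [h2] at h1 ⊢
    have h3 : ((d:ℝ) - c)/(d:ℝ) - 1 = -((c:ℝ)/(d:ℝ)) := by field_simp; ring
    linarith [h1, h3.le, h3.ge]
  -- combine:  m * (c/d) ≤ (2k+2) log n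
  have hcomb : (m:ℝ) * ((c:ℝ)/(d:ℝ)) ≤ (2*(k:ℝ)+2) * Real.log n := by
    have := mul_le_mul_of_nonneg_left hgap (by positivity : (0:ℝ) ≤ (m:ℝ))
    nlinarith [hlog, hlogB]
  have hcombm : (m:ℝ) * (c:ℝ) ≤ (2*(k:ℝ)+2) * Real.log n * (d:ℝ) := by
    have := mul_le_mul_of_nonneg_right hcomb (le_of_lt hdR)
    have hne : (d:ℝ) ≠ 0 := ne_of_gt hdR
    field_simp at this
    linarith [this]
  -- lower bound on m * c
  have hkey : ((11*(k^2+k) : ℕ):ℝ) ≤ ((k:ℝ)+2)^(k+2) := by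
    have := keyNat k hk
    exact_mod_cast this
  have hd2kec : (d:ℝ) ≤ 2*k * Real.exp 1 * (c:ℝ) := eBound k hk
  have hcR : (0:ℝ) < (c:ℝ) := by
    have : 0 < c := pow_pos (by omega) _
    exact_mod_cast this
  have hmlow : ((k:ℝ)+2)^(k+2) * Real.log n ≤ (m:ℝ) := hm
  have hexp : Real.exp 1 < 2.72 := lt_trans Real.exp_one_lt_d9 (by norm_num)
  have hkR : (1:ℝ) ≤ (k:ℝ) := by exact_mod_cast hk
  push_cast at hkey
  -- chain of bounds
  have A : ((k:ℝ)+2)^(k+2) * Real.log n * c ≤ (m:ℝ)*c :=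
    mul_le_mul_of_nonneg_right hmlow hcR.le
  have B : 11*((k:ℝ)^2+k) * Real.log n * c ≤ ((k:ℝ)+2)^(k+2) * Real.log n * c := by
    have := mul_le_mul_of_nonneg_right hkey hlogn.le
    exact mul_le_mul_of_nonneg_right this hcR.le
  have Cc : (2*(k:ℝ)+2) * Real.log n * d ≤ (2*(k:ℝ)+2) * Real.log n * (2*k*Real.exp 1*(c:ℝ)) := by
    apply mul_le_mul_of_nonneg_left hd2kec
    positivity
  have hD : Real.exp 1 * (4*(k:ℝ)^2+4*k) < 11*((k:ℝ)^2+k) := by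
    nlinarith [hexp, hkR]
  have hE := mul_lt_mul_of_pos_right hD (mul_pos hlogn hcR)
  nlinarith [hcombm, A, B, Cc, hE]

end AuxMAS

/-- For `k < n` and a ground set `V` with `|V| = n`, every `m ≥ (k+2)^(k+2) · ln n`
admits a MAS function `F : P_{≤k}(V) → ℝ^m`. -/
theorem stmt2 (k n : ℕ) (hkn : k < n) (V : Type*) [Fintype V]
    (hV : Fintype.card V = n) (m : ℕ)
    (hm : ((k : ℝ) + 2) ^ (k + 2) * Real.log n ≤ m) :
    ∃ F : {S : Multiset V // Multiset.card S ≤ k} → Fin m → ℝ,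
      (∀ S T, S.val ≤ T.val → F S ≤ F T) ∧
      (∀ S T, F S ≤ F T → S.val ≤ T.val) := by
  classical
  rcases Nat.eq_zero_or_pos k with hk0 | hk
  · -- k = 0 : only the empty multiset
    refine ⟨fun _ _ => 0, fun S T _ => le_refl _, fun S T _ => ?_⟩
    have hS : S.val = 0 := Multiset.card_eq_zero.mp (Nat.le_zero.mp (hk0 ▸ S.2))
    rw [hS]
    exact Multiset.zero_le _
  · have hn2 : 2 ≤ n := by omega
    set P_all : Finset (V × Finset V) :=
      univ.filter (fun p : V × Finset V => p.1 ∉ p.2 ∧ p.2.card ≤ 2*k-1) with hPdef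
    obtain ⟨fs, hfs⟩ := greedy hk m P_all (fun p hp => (mem_filter.mp hp).2)
    -- cardinality bound on P_all
    have hPcard : P_all.card ≤ 2*k*n^(2*k) := by
      have hsub : P_all ⊆ univ ×ˢ (univ.filter (fun D : Finset V => D.card ≤ 2*k-1)) := by
        intro p hp
        rw [Finset.mem_product]
        exact ⟨mem_univ _, mem_filter.mpr ⟨mem_univ _, (mem_filter.mp hp).2.2⟩⟩
      have h1 : P_all.card ≤ n * (univ.filter (fun D : Finset V => D.card ≤ 2*k-1)).card := by
        have := Finset.card_le_card hsub
        rwa [Finset.card_product, Finset.card_univ, hV] at this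
      have h2 : (univ.filter (fun D : Finset V => D.card ≤ 2*k-1)).card ≤ 2*k * n^(2*k-1) := by
        have hsub2 : univ.filter (fun D : Finset V => D.card ≤ 2*k-1)
            ⊆ (Finset.range (2*k)).biUnion (fun i => Finset.powersetCard i univ) := by
          intro D hD
          rw [Finset.mem_biUnion]
          exact ⟨D.card, Finset.mem_range.mpr (by have := (mem_filter.mp hD).2; omega),
            Finset.mem_powersetCard.mpr ⟨Finset.subset_univ _, rfl⟩⟩
        calc (univ.filter (fun D : Finset V => D.card ≤ 2*k-1)).card
            ≤ ((Finset.range (2*k)).biUnion (fun i => Finset.powersetCard i univ)).card :=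
              Finset.card_le_card hsub2
          _ ≤ ∑ i ∈ Finset.range (2*k), (Finset.powersetCard i univ).card :=
              Finset.card_biUnion_le
          _ ≤ ∑ _i ∈ Finset.range (2*k), n^(2*k-1) := by
              apply Finset.sum_le_sum
              intro i hi
              rw [Finset.card_powersetCard, Finset.card_univ, hV]
              calc n.choose i ≤ n^i := Nat.choose_le_pow n i
                _ ≤ n^(2*k-1) := Nat.pow_le_pow_right (by omega)
                    (by have := Finset.mem_range.mp hi; omega)
          _ = 2*k * n^(2*k-1) := by rw [Finset.sum_const, Finset.card_range, smul_eq_mul]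
      calc P_all.card ≤ n * (2*k * n^(2*k-1)) := le_trans h1 (Nat.mul_le_mul_left n h2)
        _ = 2*k * (n * n^(2*k-1)) := by ring
        _ = 2*k * n^(2*k) := by
            congr 1
            rw [← pow_succ']
            congr 1
            omega
    -- the uncovered set is empty
    have hU : P_all.filter (fun p => ∀ i, ¬ Covers (fs i) p) = ∅ := by
      by_contra hne
      obtain ⟨p, hp⟩ := Finset.nonempty_of_ne_empty hne
      have hcard1 : 1 ≤ (P_all.filter (fun p => ∀ i, ¬ Covers (fs i) p)).card :=
        Finset.card_pos.mpr ⟨p, hp⟩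
      apply analytic k n m hk hkn hm
      calc ((2*k)^(2*k))^m = ((2*k)^(2*k))^m * 1 := (mul_one _).symm
        _ ≤ ((2*k)^(2*k))^m * (P_all.filter (fun p => ∀ i, ¬ Covers (fs i) p)).card :=
            Nat.mul_le_mul_left _ hcard1
        _ ≤ ((2*k)^(2*k) - (2*k-1)^(2*k-1))^m * P_all.card := hfs
        _ ≤ ((2*k)^(2*k) - (2*k-1)^(2*k-1))^m * (2*k*n^(2*k)) := Nat.mul_le_mul_left _ hPcard
    -- every good pair is covered by some fs i
    have hcover : ∀ v : V, ∀ D : Finset V, v ∉ D → D.card ≤ 2*k-1 →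
        ∃ i, Covers (fs i) (v, D) := by
      intro v D h1 h2
      by_contra hno
      push_neg at hno
      have : (v, D) ∈ P_all.filter (fun p => ∀ i, ¬ Covers (fs i) p) := by
        rw [Finset.mem_filter]
        exact ⟨Finset.mem_filter.mpr ⟨mem_univ _, h1, h2⟩, hno⟩
      rw [hU] at this
      exact absurd this (Finset.notMem_empty _)
    -- define F
    refine ⟨fun S i => ((S.val.filter (fun u => (fs i u).val = 0)).card : ℝ), ?_, ?_⟩
    · intro S T hST i
      have := Multiset.card_le_card
        (Multiset.filter_le_filter (fun u => (fs i u).val = 0) hST)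
      simp only []
      exact_mod_cast this
    · intro S T hFST
      by_contra hST
      rw [Multiset.le_iff_count] at hST
      push_neg at hST
      obtain ⟨v, hv⟩ := hST
      have hvS : v ∈ S.val := by
        rw [← Multiset.count_pos]
        omega
      set D : Finset V := ((S.val + T.val).toFinset).erase v with hDdef
      have hvD : v ∉ D := Finset.notMem_erase _ _
      have hDcard : D.card ≤ 2*k-1 := by
        have hvmem : v ∈ (S.val + T.val).toFinset := by
          rw [Multiset.mem_toFinset, Multiset.mem_add]
          exact Or.inl hvS
        rw [hDdef, Finset.card_erase_of_mem hvmem]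
        have h1 : (S.val + T.val).toFinset.card ≤ Multiset.card (S.val + T.val) :=
          Multiset.toFinset_card_le _
        have h2 : Multiset.card (S.val + T.val) ≤ 2*k := by
          rw [Multiset.card_add]
          have := S.2; have := T.2; omega
        omega
      obtain ⟨i, hcov⟩ := hcover v D hvD hDcard
      obtain ⟨hcov1, hcov2⟩ := hcov
      -- F S i = count v S.val, F T i = count v T.val
      have key : ∀ M : Multiset V, M ≤ S.val + T.val →
          (M.filter (fun u => (fs i u).val = 0)).card = M.count v := by
        intro M hM
        have : M.filter (fun u => (fs i u).val = 0) = M.filter (fun u => v = u) := by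
          apply Multiset.filter_congr
          intro u hu
          constructor
          · intro h0
            by_contra hne
            have huD : u ∈ D := by
              rw [hDdef, Finset.mem_erase]
              refine ⟨fun e => hne e.symm, ?_⟩
              rw [Multiset.mem_toFinset]
              exact Multiset.mem_of_le hM hu
            exact hcov2 u huD h0
          · rintro rfl
            exact hcov1
        rw [this, Multiset.count_eq_card_filter_eq]
      have hFS := hFST i
      simp only at hFS
      rw [key S.val (Multiset.le_add_right _ _), key T.val (Multiset.le_add_left _ _)] at hFS
      have : S.val.count v ≤ T.val.count v := by exact_mod_cast hFS
      omega
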